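/- The measure with density 1/(x+y-2xy)^2 on (0,1)×(0,1) is invariant under the natural extension of the even Farey map F̄_e, where F̄_e(x,y) = (x/(1-2x), y/(1+2y)) for x ∈ [0,1/3), F̄_e(x,y) = ((1-2x)/x, 1/(2+y)) for x ∈ [1/3,1/2), and F̄_e(x,y) = ((2x-1)/x, 1/(2-y)) for x ∈ [1/2,1). -/

import Mathlib

open MeasureTheory

/-- The natural extension of the even Farey map. -/
noncomputable def evenFareyNatExt (p : ℝ × ℝ) : ℝ × ℝ :=
  if p.1 < 1/3 then (p.1 / (1 - 2*p.1), p.2 / (1 + 2*p.2))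
  else if p.1 < 1/2 then ((1 - 2*p.1) / p.1, 1 / (2 + p.2))
  else ((2*p.1 - 1) / p.1, 1 / (2 - p.2))

/-- The measure with density 1/(x+y-2xy)² on (0,1)×(0,1). -/
noncomputable def evenFareyMeasure : Measure (ℝ × ℝ) :=
  ((volume : Measure (ℝ × ℝ)).restrict (Set.Ioo 0 1 ×ˢ Set.Ioo 0 1)).withDensity
    (fun p => ENNReal.ofReal (1 / (p.1 + p.2 - 2 * p.1 * p.2)^2))

open Set in
/-- density function -/
noncomputable def fareyρ : ℝ × ℝ → ENNReal :=
  fun p => ENNReal.ofReal (1 / (p.1 + p.2 - 2 * p.1 * p.2)^2)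

open Set in
lemma det_smulRight_prodMap (a b : ℝ) :
    (((1 : ℝ →L[ℝ] ℝ).smulRight a).prodMap ((1 : ℝ →L[ℝ] ℝ).smulRight b)).det = a * b := by
  have h1 : ∀ c : ℝ, LinearMap.det (((1 : ℝ →L[ℝ] ℝ).smulRight c : ℝ →L[ℝ] ℝ) : ℝ →ₗ[ℝ] ℝ) = c := by
    intro c
    have : (((1 : ℝ →L[ℝ] ℝ).smulRight c : ℝ →L[ℝ] ℝ) : ℝ →ₗ[ℝ] ℝ) = c • LinearMap.id := by
      ext; simp [smul_eq_mul, mul_comm]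
    rw [this, LinearMap.det_smul, LinearMap.det_id, Module.finrank_self]
    simp
  rw [ContinuousLinearMap.det, ContinuousLinearMap.coe_prodMap]
  let B : Module.Basis (Unit ⊕ Unit) ℝ (ℝ × ℝ) := (Module.Basis.singleton Unit ℝ).prod (Module.Basis.singleton Unit ℝ)
  rw [← LinearMap.det_toMatrix B, LinearMap.toMatrix_prodMap,
    Matrix.det_fromBlocks_zero₂₁, LinearMap.det_toMatrix, LinearMap.det_toMatrix, h1, h1]

open Set in
lemma branch_key (f g f' g' : ℝ → ℝ) (a b c d : ℝ)
    (hFm : Measurable (fun p : ℝ × ℝ => (f p.1, g p.2)))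
    (hf : ∀ x ∈ Ioo a b, HasDerivAt f (f' x) x)
    (hg : ∀ y ∈ Ioo (0:ℝ) 1, HasDerivAt g (g' y) y)
    (himg : (fun p : ℝ × ℝ => (f p.1, g p.2)) '' (Ioo a b ×ˢ Ioo 0 1) = Ioo 0 1 ×ˢ Ioo c d)
    (hinj : InjOn (fun p : ℝ × ℝ => (f p.1, g p.2)) (Ioo a b ×ˢ Ioo 0 1))
    (hkey : ∀ p ∈ Ioo a b ×ˢ Ioo (0:ℝ) 1,
      ENNReal.ofReal |f' p.1 * g' p.2| * fareyρ (f p.1, g p.2) = fareyρ p)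
    (A : Set (ℝ × ℝ)) (hA : MeasurableSet A) :
    ∫⁻ p in (fun p : ℝ × ℝ => (f p.1, g p.2)) ⁻¹' A ∩ (Ioo a b ×ˢ Ioo 0 1), fareyρ p
      = ∫⁻ p in A ∩ (Ioo 0 1 ×ˢ Ioo c d), fareyρ p := by
  set F := fun p : ℝ × ℝ => (f p.1, g p.2) with hF
  set s : Set (ℝ × ℝ) := Ioo a b ×ˢ Ioo 0 1 with hsdef
  have hs : MeasurableSet s := measurableSet_Ioo.prod measurableSet_Ioo
  set F' : ℝ × ℝ → (ℝ × ℝ →L[ℝ] ℝ × ℝ) :=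
    fun p => ((1 : ℝ →L[ℝ] ℝ).smulRight (f' p.1)).prodMap ((1 : ℝ →L[ℝ] ℝ).smulRight (g' p.2))
    with hF'
  have hder : ∀ p ∈ s, HasFDerivWithinAt F (F' p) s p := by
    intro p hp
    exact (HasFDerivAt.prodMap p (hf p.1 hp.1).hasFDerivAt (hg p.2 hp.2).hasFDerivAt).hasFDerivWithinAt
  have himg2 : ∫⁻ q in F '' s, A.indicator fareyρ q
      = ∫⁻ p in s, ENNReal.ofReal |(F' p).det| * A.indicator fareyρ (F p) :=
    lintegral_image_eq_lintegral_abs_det_fderiv_mul volume hs hder hinj _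
  have hR : ∫⁻ q in A ∩ (Ioo 0 1 ×ˢ Ioo c d), fareyρ q = ∫⁻ q in F '' s, A.indicator fareyρ q := by
    rw [himg, lintegral_indicator hA, Measure.restrict_restrict hA]
  have hL : ∫⁻ p in F ⁻¹' A ∩ s, fareyρ p
      = ∫⁻ p in s, ENNReal.ofReal |(F' p).det| * A.indicator fareyρ (F p) := by
    have hrw : ∀ p, A.indicator fareyρ (F p)
        = (F ⁻¹' A).indicator (fun p => fareyρ (F p)) p := by
      intro p
      classical
      simp [Set.indicator_apply]
    calc ∫⁻ p in F ⁻¹' A ∩ s, fareyρ p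
        = ∫⁻ p in F ⁻¹' A, fareyρ p ∂(volume.restrict s) := by
          rw [Measure.restrict_restrict (hFm hA)]
      _ = ∫⁻ p, (F ⁻¹' A).indicator fareyρ p ∂(volume.restrict s) := by
          rw [lintegral_indicator (hFm hA)]
      _ = ∫⁻ p in s, ENNReal.ofReal |(F' p).det| * A.indicator fareyρ (F p) := by
          apply setLIntegral_congr_fun hs
          intro p hp
          beta_reduce
          rw [hrw p]
          by_cases hpa : F p ∈ A
          · classical
            simp only [Set.indicator_apply, Set.mem_preimage, if_pos hpa]
            have := hkey p hp
            rw [hF', det_smulRight_prodMap]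
            exact this.symm
          · classical
            simp only [Set.indicator_apply, Set.mem_preimage, if_neg hpa, mul_zero]
  rw [hL, hR, himg2]

open Set in
lemma split3 (B s₁ s₂ s₃ N S : Set (ℝ × ℝ)) (hB : MeasurableSet B)
    (h2 : MeasurableSet s₂) (h3 : MeasurableSet s₃)
    (hd12 : Disjoint s₁ s₂) (hd13 : Disjoint s₁ s₃) (hd23 : Disjoint s₂ s₃)
    (hN : volume N = 0) (hcover : S ⊆ s₁ ∪ s₂ ∪ s₃ ∪ N) (hsub : s₁ ∪ s₂ ∪ s₃ ⊆ S) :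
    ∫⁻ p in B ∩ S, fareyρ p = (∫⁻ p in B ∩ s₁, fareyρ p) + (∫⁻ p in B ∩ s₂, fareyρ p)
      + ∫⁻ p in B ∩ s₃, fareyρ p := by
  have hae : (B ∩ S : Set (ℝ × ℝ)) =ᵐ[(volume : Measure (ℝ × ℝ))]
      ((B ∩ s₁ ∪ B ∩ s₂) ∪ B ∩ s₃ : Set (ℝ × ℝ)) := by
    rw [MeasureTheory.ae_eq_set]
    constructor
    · apply measure_mono_null _ hN
      rintro p ⟨⟨hpB, hpS⟩, hpn⟩
      rcases hcover hpS with ((h | h) | h) | h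
      · exact absurd (Or.inl (Or.inl ⟨hpB, h⟩)) hpn
      · exact absurd (Or.inl (Or.inr ⟨hpB, h⟩)) hpn
      · exact absurd (Or.inr ⟨hpB, h⟩) hpn
      · exact h
    · apply measure_mono_null _ (measure_empty (μ := (volume : Measure (ℝ × ℝ))))
      rintro p ⟨hp, hpn⟩
      rcases hp with ((⟨h1, h4⟩ | ⟨h1, h4⟩) | ⟨h1, h4⟩)
      · exact absurd ⟨h1, hsub (Or.inl (Or.inl h4))⟩ hpn
      · exact absurd ⟨h1, hsub (Or.inl (Or.inr h4))⟩ hpn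
      · exact absurd ⟨h1, hsub (Or.inr h4)⟩ hpn
  rw [setLIntegral_congr hae,
    lintegral_union (hB.inter h3)
      (by
        apply Set.disjoint_union_left.2
        exact ⟨(hd13.mono inter_subset_right inter_subset_right),
          (hd23.mono inter_subset_right inter_subset_right)⟩),
    lintegral_union (hB.inter h2) (hd12.mono inter_subset_right inter_subset_right)]

open Set in
lemma vline_null (c : ℝ) : volume (({c} : Set ℝ) ×ˢ (univ : Set ℝ)) = 0 := by
  rw [Measure.volume_eq_prod ℝ ℝ, Measure.prod_prod]
  simp

open Set in
lemma hline_null (c : ℝ) : volume ((univ : Set ℝ) ×ˢ ({c} : Set ℝ)) = 0 := by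
  rw [Measure.volume_eq_prod ℝ ℝ, Measure.prod_prod]
  simp

lemma Dpos {x y : ℝ} (hx1 : 0 < x) (hx2 : x < 1) (hy1 : 0 < y) (hy2 : y < 1) :
    0 < x + y - 2*x*y := by
  nlinarith [mul_pos hx1 (sub_pos.2 hy2), mul_pos hy1 (sub_pos.2 hx2)]

open Set in
lemma branch1 (A : Set (ℝ × ℝ)) (hA : MeasurableSet A) :
    ∫⁻ p in (fun p : ℝ × ℝ => (p.1 / (1 - 2*p.1), p.2 / (1 + 2*p.2))) ⁻¹' A
        ∩ (Ioo 0 (1/3) ×ˢ Ioo 0 1), fareyρ p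
      = ∫⁻ p in A ∩ (Ioo 0 1 ×ˢ Ioo 0 (1/3)), fareyρ p := by
  refine branch_key (fun x => x / (1 - 2*x)) (fun y => y / (1 + 2*y))
    (fun x => 1 / (1 - 2*x)^2) (fun y => 1 / (1 + 2*y)^2) 0 (1/3) 0 (1/3)
    (by measurability) ?_ ?_ ?_ ?_ ?_ A hA
  · intro x hx
    have hd : (1:ℝ) - 2*x ≠ 0 := by
      have : x < 1/3 := hx.2; intro h; nlinarith
    have H := (hasDerivAt_id x).div
      ((((hasDerivAt_id x).const_mul 2)).const_sub 1) hd
    refine H.congr_deriv ?_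
    simp only [id_eq]
    field_simp
    ring
  · intro y hy
    have hd : (1:ℝ) + 2*y ≠ 0 := by intro h; nlinarith [hy.1]
    have H := (hasDerivAt_id y).div
      ((((hasDerivAt_id y).const_mul 2)).const_add 1) hd
    refine H.congr_deriv ?_
    simp only [id_eq]
    field_simp
    ring
  · ext ⟨u, v⟩
    simp only [Set.mem_image, Set.mem_prod, Set.mem_Ioo, Prod.mk.injEq, Prod.exists]
    constructor
    · rintro ⟨x, y, ⟨⟨hx1, hx2⟩, hy1, hy2⟩, hxu, hyv⟩
      have hdx : (0:ℝ) < 1 - 2*x := by linarith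
      have hdy : (0:ℝ) < 1 + 2*y := by linarith
      subst hxu hyv
      refine ⟨⟨div_pos hx1 hdx, ?_⟩, div_pos hy1 hdy, ?_⟩
      · rw [div_lt_one hdx]; linarith
      · rw [div_lt_iff₀ hdy]; linarith
    · rintro ⟨⟨hu1, hu2⟩, hv1, hv2⟩
      have hdu : (0:ℝ) < 1 + 2*u := by linarith
      have hdv : (0:ℝ) < 1 - 2*v := by linarith
      refine ⟨u / (1 + 2*u), v / (1 - 2*v),
        ⟨⟨div_pos hu1 hdu, ?_⟩, div_pos hv1 hdv, ?_⟩, ?_, ?_⟩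
      · rw [div_lt_iff₀ hdu]; linarith
      · rw [div_lt_one hdv]; linarith
      · have h' : 1 - 2*(u/(1+2*u)) = 1/(1+2*u) := by field_simp; ring
        rw [h']
        field_simp
      · have h' : 1 + 2*(v/(1-2*v)) = 1/(1-2*v) := by field_simp; ring
        rw [h']
        field_simp; exact div_self (by intro h; linarith)
  · rintro ⟨x1, y1⟩ ⟨⟨ha1, ha2⟩, hb1, hb2⟩ ⟨x2, y2⟩ ⟨⟨hc1, hc2⟩, hd1, hd2⟩ h
    have e1 : (0:ℝ) < 1 - 2*x1 := by linarith
    have e2 : (0:ℝ) < 1 - 2*x2 := by linarith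
    have e3 : (0:ℝ) < 1 + 2*y1 := by linarith
    have e4 : (0:ℝ) < 1 + 2*y2 := by linarith
    simp only [Prod.mk.injEq] at h ⊢
    obtain ⟨h1, h2⟩ := h
    rw [div_eq_div_iff e1.ne' e2.ne'] at h1
    rw [div_eq_div_iff e3.ne' e4.ne'] at h2
    constructor
    · linear_combination h1
    · linear_combination h2
  · rintro ⟨x, y⟩ ⟨⟨hx1, hx2⟩, hy1, hy2⟩
    have e1 : (0:ℝ) < 1 - 2*x := by linarith
    have e2 : (0:ℝ) < 1 + 2*y := by linarith
    have hD : (0:ℝ) < x + y - 2*x*y := Dpos hx1 (by linarith) hy1 hy2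
    simp only [fareyρ]
    rw [← ENNReal.ofReal_mul (abs_nonneg _)]
    congr 1
    rw [abs_of_nonneg (by positivity)]
    have hE : x/(1-2*x) + y/(1+2*y) - 2*(x/(1-2*x))*(y/(1+2*y))
        = (x + y - 2*x*y) / ((1-2*x)*(1+2*y)) := by
      field_simp [show (1:ℝ) - x*2 ≠ 0 by intro h; linarith, show (1:ℝ) + y*2 ≠ 0 by intro h; linarith]
      ring
    show 1/(1-2*x)^2 * (1/(1+2*y)^2) * (1/(x/(1-2*x) + y/(1+2*y) - 2*(x/(1-2*x))*(y/(1+2*y)))^2)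
        = 1/(x + y - 2*x*y)^2
    rw [hE]
    field_simp

open Set in
lemma branch2 (A : Set (ℝ × ℝ)) (hA : MeasurableSet A) :
    ∫⁻ p in (fun p : ℝ × ℝ => ((1 - 2*p.1) / p.1, 1 / (2 + p.2))) ⁻¹' A
        ∩ (Ioo (1/3) (1/2) ×ˢ Ioo 0 1), fareyρ p
      = ∫⁻ p in A ∩ (Ioo 0 1 ×ˢ Ioo (1/3) (1/2)), fareyρ p := by
  refine branch_key (fun x => (1 - 2*x) / x) (fun y => 1 / (2 + y))
    (fun x => -1 / x^2) (fun y => -1 / (2 + y)^2) (1/3) (1/2) (1/3) (1/2)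
    (by measurability) ?_ ?_ ?_ ?_ ?_ A hA
  · intro x hx
    have hd : x ≠ 0 := by have := hx.1; intro h; rw [h] at this; norm_num at this
    have H := ((((hasDerivAt_id x).const_mul 2)).const_sub 1).div (hasDerivAt_id x) hd
    refine H.congr_deriv ?_
    simp only [id_eq]
    field_simp
    ring
  · intro y hy
    have hd : (2:ℝ) + y ≠ 0 := by intro h; nlinarith [hy.1]
    have H := (hasDerivAt_const y (1:ℝ)).div ((hasDerivAt_id y).const_add 2) hd
    refine H.congr_deriv ?_
    simp only [id_eq]
    field_simp
    ring
  · ext ⟨u, v⟩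
    simp only [Set.mem_image, Set.mem_prod, Set.mem_Ioo, Prod.mk.injEq, Prod.exists]
    constructor
    · rintro ⟨x, y, ⟨⟨hx1, hx2⟩, hy1, hy2⟩, hxu, hyv⟩
      have hx0 : (0:ℝ) < x := by linarith
      have hnum : (0:ℝ) < 1 - 2*x := by linarith
      have hden : (0:ℝ) < 2 + y := by linarith
      subst hxu hyv
      refine ⟨⟨div_pos hnum hx0, ?_⟩, ?_, ?_⟩
      · rw [div_lt_one hx0]; linarith
      · rw [lt_div_iff₀ hden]; linarith
      · rw [div_lt_iff₀ hden]; linarith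
    · rintro ⟨⟨hu1, hu2⟩, hv1, hv2⟩
      have hdu : (0:ℝ) < u + 2 := by linarith
      have hv0 : (0:ℝ) < v := by linarith
      refine ⟨1 / (u + 2), 1/v - 2, ⟨⟨?_, ?_⟩, ?_, ?_⟩, ?_, ?_⟩
      · rw [lt_div_iff₀ hdu]; linarith
      · rw [div_lt_iff₀ hdu]; linarith
      · have h2 : 2 < 1/v := by rw [lt_div_iff₀ hv0]; linarith
        linarith
      · have h3 : 1/v < 3 := by rw [div_lt_iff₀ hv0]; linarith
        linarith
      · field_simp; ring
      · have hh : 2 + (1/v - 2) = 1/v := by ring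
        rw [hh, one_div_one_div]
  · rintro ⟨x1, y1⟩ ⟨⟨ha1, ha2⟩, hb1, hb2⟩ ⟨x2, y2⟩ ⟨⟨hc1, hc2⟩, hd1, hd2⟩ h
    have e1 : (0:ℝ) < x1 := by linarith
    have e2 : (0:ℝ) < x2 := by linarith
    have e3 : (0:ℝ) < 2 + y1 := by linarith
    have e4 : (0:ℝ) < 2 + y2 := by linarith
    simp only [Prod.mk.injEq] at h ⊢
    obtain ⟨h1, h2⟩ := h
    rw [div_eq_div_iff e1.ne' e2.ne'] at h1
    rw [div_eq_div_iff e3.ne' e4.ne'] at h2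
    constructor
    · linear_combination -h1
    · linear_combination -h2
  · rintro ⟨x, y⟩ ⟨⟨hx1, hx2⟩, hy1, hy2⟩
    have e1 : (0:ℝ) < x := by linarith
    have e2 : (0:ℝ) < 2 + y := by linarith
    have hD : (0:ℝ) < x + y - 2*x*y := Dpos e1 (by linarith) hy1 hy2
    simp only [fareyρ]
    rw [← ENNReal.ofReal_mul (abs_nonneg _)]
    congr 1
    have habs : (-1/x^2) * (-1/(2+y)^2) = 1/x^2 * (1/(2+y)^2) := by ring
    rw [habs, abs_of_nonneg (by positivity)]
    have hE : (1 - 2*x)/x + 1/(2+y) - 2*((1 - 2*x)/x)*(1/(2+y))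
        = (x + y - 2*x*y) / (x*(2+y)) := by
      field_simp
      ring
    show 1/x^2 * (1/(2+y)^2) * (1/((1 - 2*x)/x + 1/(2+y) - 2*((1 - 2*x)/x)*(1/(2+y)))^2)
        = 1/(x + y - 2*x*y)^2
    rw [hE]
    field_simp

open Set in
lemma branch3 (A : Set (ℝ × ℝ)) (hA : MeasurableSet A) :
    ∫⁻ p in (fun p : ℝ × ℝ => ((2*p.1 - 1) / p.1, 1 / (2 - p.2))) ⁻¹' A
        ∩ (Ioo (1/2) 1 ×ˢ Ioo 0 1), fareyρ p
      = ∫⁻ p in A ∩ (Ioo 0 1 ×ˢ Ioo (1/2) 1), fareyρ p := by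
  refine branch_key (fun x => (2*x - 1) / x) (fun y => 1 / (2 - y))
    (fun x => 1 / x^2) (fun y => 1 / (2 - y)^2) (1/2) 1 (1/2) 1
    (by measurability) ?_ ?_ ?_ ?_ ?_ A hA
  · intro x hx
    have hd : x ≠ 0 := by have := hx.1; intro h; rw [h] at this; norm_num at this
    have H := ((((hasDerivAt_id x).const_mul 2)).sub_const 1).div (hasDerivAt_id x) hd
    refine H.congr_deriv ?_
    simp only [id_eq]
    field_simp
    ring
  · intro y hy
    have hd : (2:ℝ) - y ≠ 0 := by have := hy.2; intro h; nlinarith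
    have H := (hasDerivAt_const y (1:ℝ)).div ((hasDerivAt_id y).const_sub 2) hd
    refine H.congr_deriv ?_
    simp only [id_eq]
    field_simp
    ring
  · ext ⟨u, v⟩
    simp only [Set.mem_image, Set.mem_prod, Set.mem_Ioo, Prod.mk.injEq, Prod.exists]
    constructor
    · rintro ⟨x, y, ⟨⟨hx1, hx2⟩, hy1, hy2⟩, hxu, hyv⟩
      have hx0 : (0:ℝ) < x := by linarith
      have hnum : (0:ℝ) < 2*x - 1 := by linarith
      have hden : (0:ℝ) < 2 - y := by linarith
      subst hxu hyv
      refine ⟨⟨div_pos hnum hx0, ?_⟩, ?_, ?_⟩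
      · rw [div_lt_one hx0]; linarith
      · rw [lt_div_iff₀ hden]; linarith
      · rw [div_lt_one hden]; linarith
    · rintro ⟨⟨hu1, hu2⟩, hv1, hv2⟩
      have hdu : (0:ℝ) < 2 - u := by linarith
      have hv0 : (0:ℝ) < v := by linarith
      refine ⟨1 / (2 - u), 2 - 1/v, ⟨⟨?_, ?_⟩, ?_, ?_⟩, ?_, ?_⟩
      · rw [lt_div_iff₀ hdu]; linarith
      · rw [div_lt_one hdu]; linarith
      · have h2 : 1/v < 2 := by rw [div_lt_iff₀ hv0]; linarith
        linarith
      · have h3 : 1 < 1/v := by rw [lt_div_iff₀ hv0]; linarith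
        linarith
      · field_simp; ring
      · have hh : 2 - (2 - 1/v) = 1/v := by ring
        rw [hh, one_div_one_div]
  · rintro ⟨x1, y1⟩ ⟨⟨ha1, ha2⟩, hb1, hb2⟩ ⟨x2, y2⟩ ⟨⟨hc1, hc2⟩, hd1, hd2⟩ h
    have e1 : (0:ℝ) < x1 := by linarith
    have e2 : (0:ℝ) < x2 := by linarith
    have e3 : (0:ℝ) < 2 - y1 := by linarith
    have e4 : (0:ℝ) < 2 - y2 := by linarith
    simp only [Prod.mk.injEq] at h ⊢
    obtain ⟨h1, h2⟩ := h
    rw [div_eq_div_iff e1.ne' e2.ne'] at h1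
    rw [div_eq_div_iff e3.ne' e4.ne'] at h2
    constructor
    · linear_combination h1
    · linear_combination h2
  · rintro ⟨x, y⟩ ⟨⟨hx1, hx2⟩, hy1, hy2⟩
    have e1 : (0:ℝ) < x := by linarith
    have e2 : (0:ℝ) < 2 - y := by linarith
    have hD : (0:ℝ) < x + y - 2*x*y := Dpos e1 hx2 hy1 hy2
    simp only [fareyρ]
    rw [← ENNReal.ofReal_mul (abs_nonneg _)]
    congr 1
    rw [abs_of_nonneg (by positivity)]
    have hE : (2*x - 1)/x + 1/(2-y) - 2*((2*x - 1)/x)*(1/(2-y))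
        = (x + y - 2*x*y) / (x*(2-y)) := by
      field_simp
      ring
    show 1/x^2 * (1/(2-y)^2) * (1/((2*x - 1)/x + 1/(2-y) - 2*((2*x - 1)/x)*(1/(2-y)))^2)
        = 1/(x + y - 2*x*y)^2
    rw [hE]
    field_simp

lemma measurable_evenFareyNatExt : Measurable evenFareyNatExt := by
  unfold evenFareyNatExt
  have m1 : Measurable (fun p : ℝ × ℝ => (p.1 / (1 - 2*p.1), p.2 / (1 + 2*p.2))) :=
    (measurable_fst.div ((measurable_fst.const_mul 2).const_sub 1)).prodMk
      (measurable_snd.div ((measurable_snd.const_mul 2).const_add 1))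
  have m2 : Measurable (fun p : ℝ × ℝ => ((1 - 2*p.1) / p.1, 1 / (2 + p.2))) :=
    (((measurable_fst.const_mul 2).const_sub 1).div measurable_fst).prodMk
      (measurable_const.div (measurable_snd.const_add 2))
  have m3 : Measurable (fun p : ℝ × ℝ => ((2*p.1 - 1) / p.1, 1 / (2 - p.2))) :=
    (((measurable_fst.const_mul 2).sub_const 1).div measurable_fst).prodMk
      (measurable_const.div (measurable_snd.const_sub 2))
  exact Measurable.ite (measurableSet_lt measurable_fst measurable_const) m1
    (Measurable.ite (measurableSet_lt measurable_fst measurable_const) m2 m3)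

open Set in
theorem evenFareyNatExt_invariant :
    ∀ A : Set (ℝ × ℝ), MeasurableSet A →
      evenFareyMeasure (evenFareyNatExt ⁻¹' A) = evenFareyMeasure A := by
  intro A hA
  have hFm : Measurable evenFareyNatExt := measurable_evenFareyNatExt
  have hμ : ∀ B : Set (ℝ × ℝ), MeasurableSet B →
      evenFareyMeasure B = ∫⁻ p in B ∩ (Ioo 0 1 ×ˢ Ioo 0 1), fareyρ p := by
    intro B hB
    rw [evenFareyMeasure, withDensity_apply _ hB, Measure.restrict_restrict hB]
    rfl
  rw [hμ _ (hFm hA), hμ _ hA]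
  have hIoo : ∀ a b : ℝ, MeasurableSet ((Ioo a b : Set ℝ) ×ˢ (Ioo (0:ℝ) 1)) :=
    fun a b => measurableSet_Ioo.prod measurableSet_Ioo
  have hIoo' : ∀ a b : ℝ, MeasurableSet ((Ioo (0:ℝ) 1) ×ˢ (Ioo a b : Set ℝ)) :=
    fun a b => measurableSet_Ioo.prod measurableSet_Ioo
  have hdx : ∀ a b c d : ℝ, b ≤ c →
      Disjoint ((Ioo a b : Set ℝ) ×ˢ (Ioo (0:ℝ) 1)) ((Ioo c d : Set ℝ) ×ˢ (Ioo (0:ℝ) 1)) := by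
    intro a b c d hbc
    rw [Set.disjoint_left]
    rintro ⟨x, y⟩ ⟨⟨h1, h2⟩, _⟩ ⟨⟨h3, h4⟩, _⟩
    simp only at h1 h2 h3 h4
    linarith
  have hdy : ∀ a b c d : ℝ, b ≤ c →
      Disjoint ((Ioo (0:ℝ) 1) ×ˢ (Ioo a b : Set ℝ)) ((Ioo (0:ℝ) 1) ×ˢ (Ioo c d : Set ℝ)) := by
    intro a b c d hbc
    rw [Set.disjoint_left]
    rintro ⟨x, y⟩ ⟨_, h1, h2⟩ ⟨_, h3, h4⟩
    simp only at h1 h2 h3 h4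
    linarith
  rw [split3 (evenFareyNatExt ⁻¹' A) (Ioo 0 (1/3) ×ˢ Ioo 0 1) (Ioo (1/3) (1/2) ×ˢ Ioo 0 1)
      (Ioo (1/2) 1 ×ˢ Ioo 0 1) ((({(1/3 : ℝ)} : Set ℝ) ×ˢ (univ : Set ℝ)) ∪ (({(1/2 : ℝ)} : Set ℝ) ×ˢ (univ : Set ℝ)))
      (Ioo 0 1 ×ˢ Ioo 0 1) (hFm hA) (hIoo _ _) (hIoo _ _)
      (hdx _ _ _ _ le_rfl) (hdx _ _ _ _ (by norm_num)) (hdx _ _ _ _ le_rfl)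
      (measure_union_null (vline_null _) (vline_null _)) ?_ ?_]
  rotate_left
  · rintro ⟨x, y⟩ ⟨⟨h1, h2⟩, hy⟩
    rcases lt_trichotomy x (1/3) with h | h | h
    · exact Or.inl (Or.inl (Or.inl ⟨⟨h1, h⟩, hy⟩))
    · exact Or.inr (Or.inl ⟨by simp [h], trivial⟩)
    · rcases lt_trichotomy x (1/2) with h' | h' | h'
      · exact Or.inl (Or.inl (Or.inr ⟨⟨h, h'⟩, hy⟩))
      · exact Or.inr (Or.inr ⟨by simp [h'], trivial⟩)
      · exact Or.inl (Or.inr ⟨⟨h', h2⟩, hy⟩)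
  · rintro ⟨x, y⟩ ((⟨⟨h1, h2⟩, hy⟩ | ⟨⟨h1, h2⟩, hy⟩) | ⟨⟨h1, h2⟩, hy⟩) <;>
      exact ⟨⟨by linarith, by linarith⟩, hy⟩
  rw [split3 A (Ioo 0 1 ×ˢ Ioo 0 (1/3)) (Ioo 0 1 ×ˢ Ioo (1/3) (1/2))
      (Ioo 0 1 ×ˢ Ioo (1/2) 1) (((univ : Set ℝ) ×ˢ ({(1/3 : ℝ)} : Set ℝ)) ∪ ((univ : Set ℝ) ×ˢ ({(1/2 : ℝ)} : Set ℝ)))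
      (Ioo 0 1 ×ˢ Ioo 0 1) hA (hIoo' _ _) (hIoo' _ _)
      (hdy _ _ _ _ le_rfl) (hdy _ _ _ _ (by norm_num)) (hdy _ _ _ _ le_rfl)
      (measure_union_null (hline_null _) (hline_null _)) ?_ ?_]
  rotate_left
  · rintro ⟨x, y⟩ ⟨hx, h1, h2⟩
    rcases lt_trichotomy y (1/3) with h | h | h
    · exact Or.inl (Or.inl (Or.inl ⟨hx, h1, h⟩))
    · exact Or.inr (Or.inl ⟨trivial, by simp [h]⟩)
    · rcases lt_trichotomy y (1/2) with h' | h' | h'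
      · exact Or.inl (Or.inl (Or.inr ⟨hx, h, h'⟩))
      · exact Or.inr (Or.inr ⟨trivial, by simp [h']⟩)
      · exact Or.inl (Or.inr ⟨hx, h', h2⟩)
  · rintro ⟨x, y⟩ ((⟨hx, h1, h2⟩ | ⟨hx, h1, h2⟩) | ⟨hx, h1, h2⟩) <;>
      exact ⟨hx, by constructor <;> [linarith; linarith]⟩
  have e1 : evenFareyNatExt ⁻¹' A ∩ (Ioo 0 (1/3) ×ˢ Ioo 0 1)
      = (fun p : ℝ × ℝ => (p.1 / (1 - 2*p.1), p.2 / (1 + 2*p.2))) ⁻¹' A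
        ∩ (Ioo 0 (1/3) ×ˢ Ioo 0 1) := by
    ext ⟨x, y⟩
    simp only [Set.mem_inter_iff, Set.mem_preimage]
    constructor <;> rintro ⟨h1, h2⟩ <;> refine ⟨?_, h2⟩ <;>
      have hc : evenFareyNatExt (x, y) = ((x, y).1 / (1 - 2*(x, y).1), (x, y).2 / (1 + 2*(x, y).2)) := by
        rw [evenFareyNatExt, if_pos (show ((x, y) : ℝ × ℝ).1 < 1/3 from h2.1.2)]
    · rwa [hc] at h1
    · rwa [hc]
  have e2 : evenFareyNatExt ⁻¹' A ∩ (Ioo (1/3) (1/2) ×ˢ Ioo 0 1)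
      = (fun p : ℝ × ℝ => ((1 - 2*p.1) / p.1, 1 / (2 + p.2))) ⁻¹' A
        ∩ (Ioo (1/3) (1/2) ×ˢ Ioo 0 1) := by
    ext ⟨x, y⟩
    simp only [Set.mem_inter_iff, Set.mem_preimage]
    constructor <;> rintro ⟨h1, h2⟩ <;> refine ⟨?_, h2⟩ <;>
      have hc : evenFareyNatExt (x, y) = ((1 - 2*(x, y).1) / (x, y).1, 1 / (2 + (x, y).2)) := by
        rw [evenFareyNatExt, if_neg (not_lt.2 h2.1.1.le), if_pos h2.1.2]
    · rwa [hc] at h1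
    · rwa [hc]
  have e3 : evenFareyNatExt ⁻¹' A ∩ (Ioo (1/2) 1 ×ˢ Ioo 0 1)
      = (fun p : ℝ × ℝ => ((2*p.1 - 1) / p.1, 1 / (2 - p.2))) ⁻¹' A
        ∩ (Ioo (1/2) 1 ×ˢ Ioo 0 1) := by
    ext ⟨x, y⟩
    simp only [Set.mem_inter_iff, Set.mem_preimage]
    constructor <;> rintro ⟨h1, h2⟩ <;> refine ⟨?_, h2⟩ <;>
      have hc : evenFareyNatExt (x, y) = ((2*(x, y).1 - 1) / (x, y).1, 1 / (2 - (x, y).2)) := by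
        rw [evenFareyNatExt, if_neg (by push_neg; linarith [h2.1.1] : ¬((x, y) : ℝ × ℝ).1 < 1/3),
          if_neg (not_lt.2 h2.1.1.le)]
    · rwa [hc] at h1
    · rwa [hc]
  rw [e1, e2, e3, branch1 A hA, branch2 A hA, branch3 A hA]
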